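/- Existence of everywhere-almost-hittable (EAH) hypergraphs: for every sufficiently large prime power n, there exists an n-uniform hypergraph G = (V, E) with |V| = n² vertices and |E| = n² edges such that for every set F ⊆ V of size |F| ≤ n²/100, there exists a set H ⊆ V with: |H| ≤ 100·n·log₂ n, H is disjoint from F, and the number of edges e ∈ E with H ∩ e = ∅ is at most n. -/
import Mathlib


lemma eah_arith (m n S F : ℕ) (hn : 0 < n) (h1 : m*n ≤ 2*S) (h2 : S ≤ m*n)
    (h3 : S^2 ≤ F*(S+m^2)) (h4 : 100*F ≤ n^2) : 24*m ≤ n := by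
  rcases Nat.eq_zero_or_pos m with rfl|hm
  · simpa using hn
  have key : (100*m^2)*n^2 ≤ (4*(m*n+m^2))*n^2 := by nlinarith [sq_nonneg S, sq_nonneg (m*n)]
  have h5 : 100*m^2 ≤ 4*(m*n+m^2) := Nat.le_of_mul_le_mul_right key (by positivity)
  have h6 : (24*m)*m ≤ n*m := by nlinarith
  have := Nat.le_of_mul_le_mul_right h6 hm
  omega

/-- Existence of everywhere-almost-hittable (EAH) hypergraphs:
for every sufficiently large prime power `n` there is an `n`-uniform hypergraph
on `n²` vertices with `n²` edges such that for every forbidden set `F` with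
`|F| ≤ n²/100` there is a set `H` with `|H| ≤ 100·n·log₂ n`, disjoint from `F`,
missing at most `n` edges. -/
theorem eah_hypergraph_exists :
    ∃ N : ℕ, ∀ n ≥ N, IsPrimePow n →
      ∃ E : Finset (Finset (Fin (n ^ 2))),
        E.card = n ^ 2 ∧ (∀ e ∈ E, e.card = n) ∧
        ∀ F : Finset (Fin (n ^ 2)), (F.card : ℝ) ≤ (n : ℝ) ^ 2 / 100 →
          ∃ H : Finset (Fin (n ^ 2)),
            (H.card : ℝ) ≤ 100 * (n : ℝ) * Real.logb 2 n ∧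
            Disjoint H F ∧
            (E.filter fun e => H ∩ e = ∅).card ≤ n := by
  classical
  use 100
  intro n hn hpp
  obtain ⟨p, j, hp, hj, hpj⟩ := hpp
  haveI hfact : Fact (Nat.Prime p) := ⟨hp.nat_prime⟩
  haveI hfin : Finite (GaloisField p j) := by
    refine Nat.finite_of_card_ne_zero ?_
    rw [GaloisField.card p j (by omega)]
    exact pow_ne_zero _ hfact.out.pos.ne'
  haveI : Fintype (GaloisField p j) := Fintype.ofFinite _
  set K := GaloisField p j with hKdef
  have hK : Fintype.card K = n := by
    have h := GaloisField.card p j (by omega : j ≠ 0)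
    rw [Nat.card_eq_fintype_card] at h
    rw [h, hpj]
  have hn2 : 2 ≤ n := by omega
  have hcard : Fintype.card (K × K) = n ^ 2 := by rw [Fintype.card_prod, hK]; ring
  let σ : K × K ≃ Fin (n ^ 2) := Fintype.equivFinOfCardEq hcard
  let edge : K × K → Finset (Fin (n^2)) :=
    fun ℓ => Finset.univ.image fun x => σ (x, ℓ.1 * x + ℓ.2)
  have mem_edge : ∀ (ℓ : K × K) (q : K × K), σ q ∈ edge ℓ ↔ q.2 = ℓ.1 * q.1 + ℓ.2 := by
    intro ℓ q
    simp only [edge, Finset.mem_image, Finset.mem_univ, true_and]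
    constructor
    · rintro ⟨x, hx⟩
      have h2 : (x, ℓ.1 * x + ℓ.2) = q := σ.injective hx
      rw [← h2]
    · intro h
      exact ⟨q.1, by rw [← h]⟩
  have edge_card : ∀ ℓ : K × K, (edge ℓ).card = n := by
    intro ℓ
    rw [Finset.card_image_of_injective _ (fun x y hxy => by
      have h2 := σ.injective hxy
      exact (Prod.ext_iff.1 h2).1), Finset.card_univ, hK]
  have edge_inj : Function.Injective edge := by
    intro ℓ ℓ' h
    have hall : ∀ x : K, ℓ.1 * x + ℓ.2 = ℓ'.1 * x + ℓ'.2 := by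
      intro x
      have h1 : σ (x, ℓ.1 * x + ℓ.2) ∈ edge ℓ' := by
        rw [← h, mem_edge]
      exact (mem_edge ℓ' (x, ℓ.1 * x + ℓ.2)).1 h1
    have hb := hall 0
    simp only [mul_zero, zero_add] at hb
    have ha := hall 1
    simp only [mul_one] at ha
    rw [hb] at ha
    exact Prod.ext (add_right_cancel ha) hb
  refine ⟨Finset.univ.image edge, ?_, ?_, ?_⟩
  · rw [Finset.card_image_of_injective _ edge_inj, Finset.card_univ, hcard]
  · rintro e he
    obtain ⟨ℓ, -, rfl⟩ := Finset.mem_image.1 he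
    exact edge_card ℓ
  intro F hF
-- continuing after `intro F hF`
  let F' : Finset (K × K) := F.image σ.symm
  have memF' : ∀ q : K × K, q ∈ F' ↔ σ q ∈ F := by
    intro q
    simp only [F', Finset.mem_image]
    constructor
    · rintro ⟨r, hr, rfl⟩; simpa using hr
    · intro h; exact ⟨σ q, h, by simp⟩
  have hF'card : F'.card = F.card := Finset.card_image_of_injective _ σ.symm.injective
  have hF100 : 100 * F.card ≤ n ^ 2 := by
    have h : (100 : ℝ) * (F.card : ℝ) ≤ (n:ℝ)^2 := by linarith
    exact_mod_cast h
  let f : K × K → ℕ := fun ℓ => (Finset.univ.filter fun x : K => (x, ℓ.1 * x + ℓ.2) ∈ F').card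
  have f_le : ∀ ℓ, f ℓ ≤ n := by
    intro ℓ
    calc f ℓ ≤ Finset.univ.card := Finset.card_filter_le _ _
    _ = n := by rw [Finset.card_univ, hK]
  let Big : Finset (K × K) := Finset.univ.filter fun ℓ => n ≤ 2 * f ℓ
  have hfiber : ∀ ℓ : K × K, (F'.filter fun q => q.2 = ℓ.1 * q.1 + ℓ.2).card = f ℓ := by
    intro ℓ
    apply Finset.card_nbij (fun q => q.1)
    · intro q hq
      simp only [Finset.mem_coe, Finset.mem_filter] at hq ⊢
      refine ⟨Finset.mem_univ _, ?_⟩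
      have h2 : (q.1, ℓ.1*q.1+ℓ.2) = q := Prod.ext rfl hq.2.symm
      rw [h2]; exact hq.1
    · intro q hq q' hq' h
      have h' : q.1 = q'.1 := h
      simp only [Finset.coe_filter, Set.mem_setOf_eq] at hq hq'
      exact Prod.ext h' (by rw [hq.2, hq'.2, h'])
    · intro x hx
      simp only [Finset.coe_filter, Set.mem_setOf_eq, Finset.mem_univ, true_and] at hx
      refine ⟨(x, ℓ.1*x+ℓ.2), ?_, rfl⟩
      simp only [Finset.mem_coe, Finset.mem_filter]
      simp [hx]
  -- degree of a point
  let d : K × K → ℕ := fun q => (Big.filter fun ℓ => q.2 = ℓ.1 * q.1 + ℓ.2).card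
  have hSd : ∑ q ∈ F', d q = ∑ ℓ ∈ Big, f ℓ := by
    have : ∀ q, d q = ∑ ℓ ∈ Big, if q.2 = ℓ.1 * q.1 + ℓ.2 then 1 else 0 := by
      intro q; simp only [d]; rw [Finset.card_filter]
    simp only [this]
    rw [Finset.sum_comm]
    refine Finset.sum_congr rfl fun ℓ _ => ?_
    rw [← Finset.card_filter, hfiber]
  have hBigle : ∀ ℓ ℓ' : K × K, ℓ ≠ ℓ' → (F'.filter fun q => q.2 = ℓ.1 * q.1 + ℓ.2 ∧ q.2 = ℓ'.1 * q.1 + ℓ'.2).card ≤ 1 := by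
    intro ℓ ℓ' hne
    refine Finset.card_le_one.2 fun q hq q' hq' => ?_
    simp only [Finset.mem_filter] at hq hq'
    obtain ⟨-, h1, h2⟩ := hq
    obtain ⟨-, h1', h2'⟩ := hq'
    by_cases ha : ℓ.1 = ℓ'.1
    · exfalso
      have hb : ℓ.2 = ℓ'.2 := by
        have := h2; rw [← ha] at this; rw [h1] at this
        exact add_left_cancel this
      exact hne (Prod.ext ha hb)
    · have hx : q.1 = q'.1 := by
        have e1 : (ℓ.1 - ℓ'.1) * q.1 = ℓ'.2 - ℓ.2 := by linear_combination h2 - h1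
        have e2 : (ℓ.1 - ℓ'.1) * q'.1 = ℓ'.2 - ℓ.2 := by linear_combination h2' - h1'
        have := e1.trans e2.symm
        exact mul_left_cancel₀ (sub_ne_zero.2 ha) this
      exact Prod.ext hx (by rw [h1, h1', hx])
  have hSd2 : ∑ q ∈ F', (d q)^2 ≤ (∑ ℓ ∈ Big, f ℓ) + Big.card^2 := by
    have hdq : ∀ q, (d q)^2 = ∑ ℓ ∈ Big, ∑ ℓ' ∈ Big,
        (if q.2 = ℓ.1 * q.1 + ℓ.2 then 1 else 0) * (if q.2 = ℓ'.1 * q.1 + ℓ'.2 then 1 else 0) := by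
      intro q
      simp only [d]
      rw [sq, Finset.card_filter, Finset.sum_mul_sum]
    calc ∑ q ∈ F', (d q)^2
        = ∑ ℓ ∈ Big, ∑ ℓ' ∈ Big, ∑ q ∈ F',
            (if q.2 = ℓ.1 * q.1 + ℓ.2 then 1 else 0) * (if q.2 = ℓ'.1 * q.1 + ℓ'.2 then 1 else 0) := by
          simp only [hdq]
          rw [Finset.sum_comm]
          refine Finset.sum_congr rfl fun ℓ _ => Finset.sum_comm
      _ ≤ ∑ ℓ ∈ Big, ∑ ℓ' ∈ Big, (if ℓ' = ℓ then f ℓ else 1) := by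
          refine Finset.sum_le_sum fun ℓ _ => Finset.sum_le_sum fun ℓ' _ => ?_
          have hcnt : ∑ q ∈ F', (if q.2 = ℓ.1 * q.1 + ℓ.2 then 1 else 0) * (if q.2 = ℓ'.1 * q.1 + ℓ'.2 then 1 else 0)
              = (F'.filter fun q => q.2 = ℓ.1 * q.1 + ℓ.2 ∧ q.2 = ℓ'.1 * q.1 + ℓ'.2).card := by
            rw [Finset.card_filter]
            refine Finset.sum_congr rfl fun q _ => ?_
            by_cases h1 : q.2 = ℓ.1 * q.1 + ℓ.2 <;> by_cases h2 : q.2 = ℓ'.1 * q.1 + ℓ'.2 <;>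
              simp [h1, h2]
          rw [hcnt]
          by_cases he : ℓ' = ℓ
          · subst he
            simp only [if_pos rfl]
            rw [← hfiber ℓ']
            apply Finset.card_le_card
            intro q hq
            simp only [Finset.mem_filter] at hq ⊢
            exact ⟨hq.1, hq.2.1⟩
          · rw [if_neg he]
            exact hBigle _ _ (Ne.symm he)
      _ ≤ ∑ ℓ ∈ Big, (f ℓ + Big.card) := by
          refine Finset.sum_le_sum fun ℓ hℓ => ?_
          calc ∑ ℓ' ∈ Big, (if ℓ' = ℓ then f ℓ else 1)
              ≤ ∑ ℓ' ∈ Big, ((if ℓ' = ℓ then f ℓ else 0) + 1) := by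
                refine Finset.sum_le_sum fun ℓ' _ => ?_
                by_cases h : ℓ' = ℓ <;> simp [h]
            _ = (if ℓ ∈ Big then f ℓ else 0) + Big.card := by
                rw [Finset.sum_add_distrib, Finset.sum_ite_eq', Finset.sum_const, smul_eq_mul, mul_one]
            _ ≤ f ℓ + Big.card := by
                rw [if_pos hℓ]
      _ = (∑ ℓ ∈ Big, f ℓ) + Big.card^2 := by
          rw [Finset.sum_add_distrib, Finset.sum_const, smul_eq_mul, sq]
  have hmn : Big.card * n ≤ 2 * ∑ ℓ ∈ Big, f ℓ := by
    calc Big.card * n = ∑ _ℓ ∈ Big, n := by rw [Finset.sum_const, smul_eq_mul]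
      _ ≤ ∑ ℓ ∈ Big, 2 * f ℓ := Finset.sum_le_sum fun ℓ hℓ => (Finset.mem_filter.1 hℓ).2
      _ = 2 * ∑ ℓ ∈ Big, f ℓ := by rw [Finset.mul_sum]
  have hSmn : (∑ ℓ ∈ Big, f ℓ) ≤ Big.card * n := by
    calc (∑ ℓ ∈ Big, f ℓ) ≤ ∑ _ℓ ∈ Big, n := Finset.sum_le_sum fun ℓ _ => f_le ℓ
      _ = Big.card * n := by rw [Finset.sum_const, smul_eq_mul]
  have hCS : (∑ ℓ ∈ Big, f ℓ)^2 ≤ F.card * ((∑ ℓ ∈ Big, f ℓ) + Big.card^2) := by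
    calc (∑ ℓ ∈ Big, f ℓ)^2 = (∑ q ∈ F', d q)^2 := by rw [hSd]
      _ ≤ F'.card * ∑ q ∈ F', (d q)^2 := by
          have := sq_sum_le_card_mul_sum_sq (s := F') (f := fun q => (d q : ℕ))
          simpa using this
      _ ≤ F.card * ((∑ ℓ ∈ Big, f ℓ) + Big.card^2) := by
          rw [hF'card]
          exact Nat.mul_le_mul_left _ hSd2
  have hBigcard : Big.card ≤ n := by
    have h24 := eah_arith Big.card n (∑ ℓ ∈ Big, f ℓ) F.card (by omega) hmn hSmn hCS (by linarith [hF100])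
    omega
  -- number of columns
  set c := Nat.clog 2 n with hcdef
  have hc1 : 1 ≤ c := by
    by_contra hcon
    have hc0 : c = 0 := by omega
    have hle := Nat.le_pow_clog (by norm_num : (1:ℕ) < 2) n
    rw [← hcdef, hc0] at hle
    simp at hle
    omega
  set k := 2 * c with hkdef
  have hk1 : 1 ≤ k := by omega
  have h2k : n ^ 2 ≤ 2 ^ k := by
    calc n ^ 2 ≤ (2 ^ c) ^ 2 := Nat.pow_le_pow_left (Nat.le_pow_clog (by norm_num) n) 2
      _ = 2 ^ k := by rw [← pow_mul, mul_comm]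
  let X : K × K → Finset K := fun ℓ => Finset.univ.filter fun x => (x, ℓ.1 * x + ℓ.2) ∈ F'
  let Small : Finset (K × K) := Finset.univ.filter fun ℓ => ¬ (n ≤ 2 * f ℓ)
  have hSmallcard : Small.card ≤ n ^ 2 := by
    calc Small.card ≤ Finset.univ.card := Finset.card_filter_le _ _
      _ = n ^ 2 := by rw [Finset.card_univ, hcard]
  let cnt : (Fin k → K) → ℕ := fun g => (Small.filter fun ℓ => ∀ i, g i ∈ X ℓ).card
  have hXcard : ∀ ℓ, (X ℓ).card = f ℓ := fun ℓ => rfl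
  have hsum : ∑ g : Fin k → K, cnt g = ∑ ℓ ∈ Small, (f ℓ) ^ k := by
    have h1 : ∀ g, cnt g = ∑ ℓ ∈ Small, if (∀ i, g i ∈ X ℓ) then 1 else 0 := by
      intro g; simp only [cnt]; rw [Finset.card_filter]
    simp only [h1]
    rw [Finset.sum_comm]
    refine Finset.sum_congr rfl fun ℓ _ => ?_
    rw [← Finset.card_filter]
    have heq : (Finset.univ.filter fun g : Fin k → K => ∀ i, g i ∈ X ℓ)
        = Fintype.piFinset (fun _ : Fin k => X ℓ) := by
      ext g
      simp [Fintype.mem_piFinset]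
    rw [heq, Fintype.card_piFinset]
    simp [hXcard]
  have hlt : ∑ ℓ ∈ Small, (f ℓ) ^ k < n ^ k := by
    have hstep : 2 ^ k * ∑ ℓ ∈ Small, (f ℓ) ^ k ≤ n ^ 2 * (n - 1) ^ k := by
      rw [Finset.mul_sum]
      calc ∑ ℓ ∈ Small, 2 ^ k * (f ℓ) ^ k
          ≤ ∑ _ℓ ∈ Small, (n-1) ^ k := by
            refine Finset.sum_le_sum fun ℓ hℓ => ?_
            have hf : 2 * f ℓ ≤ n - 1 := by
              have := (Finset.mem_filter.1 hℓ).2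
              omega
            rw [← mul_pow]
            exact Nat.pow_le_pow_left hf k
        _ = Small.card * (n-1) ^ k := by rw [Finset.sum_const, smul_eq_mul]
        _ ≤ n ^ 2 * (n-1) ^ k := Nat.mul_le_mul_right _ hSmallcard
    have h2 : n ^ 2 * (n - 1) ^ k < n ^ 2 * n ^ k := by
      have hpos : 0 < n ^ 2 := by positivity
      exact (Nat.mul_lt_mul_left hpos).2 (Nat.pow_lt_pow_left (by omega) (by omega))
    have h3 : n ^ 2 * n ^ k ≤ 2 ^ k * n ^ k := Nat.mul_le_mul_right _ h2k
    have : 2 ^ k * ∑ ℓ ∈ Small, (f ℓ) ^ k < 2 ^ k * n ^ k := by omega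
    exact Nat.lt_of_mul_lt_mul_left this
  have hex : ∃ g : Fin k → K, cnt g = 0 := by
    by_contra hcon
    push_neg at hcon
    have hge : Fintype.card (Fin k → K) ≤ ∑ g : Fin k → K, cnt g := by
      calc Fintype.card (Fin k → K) = ∑ _g : Fin k → K, 1 := by
            rw [Finset.sum_const, smul_eq_mul, mul_one, Finset.card_univ]
        _ ≤ ∑ g : Fin k → K, cnt g :=
            Finset.sum_le_sum fun g _ => Nat.one_le_iff_ne_zero.2 (hcon g)
    have hcf : Fintype.card (Fin k → K) = n ^ k := by
      rw [Fintype.card_fun, hK, Fintype.card_fin]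
    rw [hcf, hsum] at hge
    omega
  obtain ⟨g, hg⟩ := hex
  -- the hitting set
  let col : K → Finset (Fin (n ^ 2)) := fun x => Finset.univ.image fun y : K => σ (x, y)
  have col_card : ∀ x, (col x).card = n := by
    intro x
    rw [Finset.card_image_of_injective _ (fun y y' h => (Prod.ext_iff.1 (σ.injective h)).2),
      Finset.card_univ, hK]
  let B : Finset (Fin (n ^ 2)) := Finset.univ.biUnion fun i : Fin k => col (g i)
  refine ⟨B \ F, ?_, Finset.sdiff_disjoint, ?_⟩
  · -- cardinality bound
    have hBk : (B \ F).card ≤ k * n := by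
      calc (B \ F).card ≤ B.card := Finset.card_le_card (Finset.sdiff_subset)
        _ ≤ ∑ i : Fin k, (col (g i)).card := Finset.card_biUnion_le
        _ = k * n := by simp [col_card, Finset.sum_const, Finset.card_univ]
    have hlogb1 : (1:ℝ) ≤ Real.logb 2 n := by
      rw [← Real.logb_self_eq_one (by norm_num : (1:ℝ) < 2)]
      exact Real.logb_le_logb_of_le (by norm_num) (by norm_num) (by exact_mod_cast hn2)
    have hclogR : (c : ℝ) ≤ Real.logb 2 n + 1 := by
      have hpow : (2:ℝ) ^ (c - 1) < n := by
        exact_mod_cast Nat.pow_pred_clog_lt_self (by norm_num : (1:ℕ) < 2) (by omega : 1 < n)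
      have hlog : ((c - 1 : ℕ) : ℝ) < Real.logb 2 n := by
        have := Real.logb_lt_logb (b := 2) (by norm_num) (by positivity) hpow
        rwa [Real.logb_pow, Real.logb_self_eq_one (by norm_num), mul_one] at this
      have hcast : ((c - 1 : ℕ) : ℝ) = (c : ℝ) - 1 := by
        rw [Nat.cast_sub hc1]; norm_num
      linarith [hcast ▸ hlog]
    calc ((B \ F).card : ℝ) ≤ (k : ℝ) * n := by exact_mod_cast hBk
      _ = 2 * (c:ℝ) * n := by rw [hkdef]; push_cast; ring
      _ ≤ 2 * (Real.logb 2 n + 1) * n := by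
          have hn0 : (0:ℝ) ≤ n := by positivity
          nlinarith
      _ ≤ 100 * (n:ℝ) * Real.logb 2 n := by
          have hn0 : (0:ℝ) ≤ n := by positivity
          nlinarith
  · -- missed edges
    rw [Finset.filter_image, Finset.card_image_of_injective _ edge_inj]
    have hsub : (Finset.univ.filter fun ℓ : K × K => (B \ F) ∩ edge ℓ = ∅) ⊆ Big := by
      intro ℓ hℓ
      simp only [Finset.mem_filter, Finset.mem_univ, true_and] at hℓ
      by_contra hnb
      have hsmall : ¬ (n ≤ 2 * f ℓ) := by
        intro hcon
        exact hnb (Finset.mem_filter.2 ⟨Finset.mem_univ _, hcon⟩)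
      have hmem : ℓ ∈ Small.filter fun ℓ => ∀ i, g i ∈ X ℓ := by
        refine Finset.mem_filter.2 ⟨Finset.mem_filter.2 ⟨Finset.mem_univ _, hsmall⟩, fun i => ?_⟩
        -- the point of edge ℓ in column g i must be in F
        set q : Fin (n ^ 2) := σ (g i, ℓ.1 * g i + ℓ.2) with hqdef
        have hqe : q ∈ edge ℓ := (mem_edge ℓ (g i, ℓ.1 * g i + ℓ.2)).2 rfl
        have hqB : q ∈ B := by
          refine Finset.mem_biUnion.2 ⟨i, Finset.mem_univ _, ?_⟩
          exact Finset.mem_image.2 ⟨ℓ.1 * g i + ℓ.2, Finset.mem_univ _, rfl⟩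
        have hqnH : q ∉ B \ F := by
          intro hq
          have : q ∈ (B \ F) ∩ edge ℓ := Finset.mem_inter.2 ⟨hq, hqe⟩
          rw [hℓ] at this
          exact absurd this (Finset.notMem_empty _)
        have hqF : q ∈ F := by
          by_contra hqF
          exact hqnH (Finset.mem_sdiff.2 ⟨hqB, hqF⟩)
        simp only [X, Finset.mem_filter]
        exact ⟨Finset.mem_univ _, (memF' _).2 hqF⟩
      rw [Finset.card_eq_zero] at hg
      rw [hg] at hmem
      exact absurd hmem (Finset.notMem_empty _)
    calc (Finset.univ.filter fun ℓ : K × K => (B \ F) ∩ edge ℓ = ∅).card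
        ≤ Big.card := Finset.card_le_card hsub
      _ ≤ n := hBigcard
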